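/- Let G_κ(t,x) = (1/2)·1_{[−κt, κt]}(x) for t ≥ 0, κ > 0. Then for all t ≥ 0 and x, y ∈ ℝ, ∫₀ᵗ ∫_ℝ G_κ(t−s, x−z) G_κ(t−s, y−z) dz ds = (κ/4) · T_κ(t, x−y)², where T_κ(t,x) = (t − |x|/(2κ)) · 1_{|x| ≤ 2κt}. -/

import Mathlib

open Real MeasureTheory

/-- Wave kernel `G_κ(t,x) = (1/2)·1_{|x| ≤ κt}` for `t ≥ 0`, and `0` for `t < 0`. -/
noncomputable def waveKernel (κ t x : ℝ) : ℝ :=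
  if 0 ≤ t ∧ |x| ≤ κ * t then 1 / 2 else 0

/-- `T_κ(t,x) = (t − |x|/(2κ))·1_{|x| ≤ 2κt}`. -/
noncomputable def Tker (κ t x : ℝ) : ℝ :=
  if |x| ≤ 2 * κ * t then t - |x| / (2 * κ) else 0

lemma wk_ptwise (κ r x y : ℝ) (hr : 0 ≤ r) (z : ℝ) :
    waveKernel κ r (x - z) * waveKernel κ r (y - z)
      = Set.indicator (Set.Icc (max x y - κ*r) (min x y + κ*r)) (fun _ => (1/4:ℝ)) z := by
  by_cases hz : z ∈ Set.Icc (max x y - κ*r) (min x y + κ*r)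
  · rw [Set.indicator_of_mem hz]
    obtain ⟨h1, h2⟩ := hz
    have hx : |x - z| ≤ κ*r :=
      abs_sub_le_iff.2 ⟨by linarith [le_max_left x y], by linarith [min_le_left x y]⟩
    have hy : |y - z| ≤ κ*r :=
      abs_sub_le_iff.2 ⟨by linarith [le_max_right x y], by linarith [min_le_right x y]⟩
    simp [waveKernel, hr, hx, hy]; norm_num
  · rw [Set.indicator_of_notMem hz]
    rw [Set.mem_Icc, not_and_or] at hz
    rcases hz with hz | hz <;> push_neg at hz
    · rcases max_cases x y with ⟨he, _⟩ | ⟨he, _⟩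
      · have h : ¬ |x - z| ≤ κ*r := by rw [abs_sub_le_iff]; push_neg; intro h'; linarith
        simp [waveKernel, h]
      · have h : ¬ |y - z| ≤ κ*r := by rw [abs_sub_le_iff]; push_neg; intro h'; linarith
        simp [waveKernel, h]
    · rcases min_cases x y with ⟨he, _⟩ | ⟨he, _⟩
      · have h : ¬ |x - z| ≤ κ*r := by rw [abs_sub_le_iff]; push_neg; intro h'; linarith
        simp [waveKernel, h]
      · have h : ¬ |y - z| ≤ κ*r := by rw [abs_sub_le_iff]; push_neg; intro h'; linarith
        simp [waveKernel, h]

lemma inner_int (κ r x y : ℝ) (hr : 0 ≤ r) :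
    ∫ z : ℝ, waveKernel κ r (x - z) * waveKernel κ r (y - z)
      = (1/4) * max 0 (2*κ*r - |x - y|) := by
  have h1 : (∫ z : ℝ, waveKernel κ r (x - z) * waveKernel κ r (y - z))
      = ∫ z : ℝ, Set.indicator (Set.Icc (max x y - κ*r) (min x y + κ*r)) (fun _ => (1/4:ℝ)) z := by
    congr 1; funext z; exact wk_ptwise κ r x y hr z
  rw [h1, MeasureTheory.integral_indicator_const _ measurableSet_Icc, Real.volume_real_Icc,
    smul_eq_mul, mul_comm]
  have h := max_sub_min_eq_abs x y
  have h2 : |x - y| = |y - x| := abs_sub_comm x y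
  rw [show min x y + κ*r - (max x y - κ*r) = 2*κ*r - |x - y| from by linarith, max_comm]

theorem waveKernel_double_integral_mul (κ t x y : ℝ) (hκ : 0 < κ) (ht : 0 ≤ t) :
    ∫ s in (0:ℝ)..t, ∫ z : ℝ, waveKernel κ (t - s) (x - z) * waveKernel κ (t - s) (y - z)
      = κ / 4 * (Tker κ t (x - y)) ^ 2 := by
  set a := |x - y| with ha
  have ha0 : 0 ≤ a := abs_nonneg _
  have hstep : ∫ s in (0:ℝ)..t, ∫ z : ℝ,
      waveKernel κ (t - s) (x - z) * waveKernel κ (t - s) (y - z)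
      = ∫ s in (0:ℝ)..t, (1/4) * max 0 (2*κ*(t-s) - a) := by
    apply intervalIntegral.integral_congr
    intro s hs
    rw [Set.uIcc_of_le ht, Set.mem_Icc] at hs
    exact inner_int κ (t - s) x y (by linarith [hs.2])
  rw [hstep]
  by_cases hcase : a ≤ 2 * κ * t
  · set c := t - a / (2*κ) with hc
    have hc0 : 0 ≤ c := by
      rw [hc, sub_nonneg, div_le_iff₀ (by positivity)]; linarith
    have hdiv : 0 ≤ a / (2*κ) := by positivity
    have hct : c ≤ t := by rw [hc]; linarith
    have hcont : Continuous fun s => (1/4 : ℝ) * max 0 (2*κ*(t-s) - a) :=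
      continuous_const.mul (continuous_const.max (by continuity))
    have hsplit : ∫ s in (0:ℝ)..t, (1/4) * max 0 (2*κ*(t-s) - a)
        = (∫ s in (0:ℝ)..c, (1/4) * max 0 (2*κ*(t-s) - a))
          + ∫ s in c..t, (1/4) * max 0 (2*κ*(t-s) - a) :=
      (intervalIntegral.integral_add_adjacent_intervals
        (hcont.intervalIntegrable _ _) (hcont.intervalIntegrable _ _)).symm
    have h2 : ∫ s in c..t, (1/4 : ℝ) * max 0 (2*κ*(t-s) - a) = 0 := by
      have : (∫ s in c..t, (1/4 : ℝ) * max 0 (2*κ*(t-s) - a)) = ∫ _s in c..t, (0:ℝ) := by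
        apply intervalIntegral.integral_congr
        intro s hs
        rw [Set.uIcc_of_le hct, Set.mem_Icc] at hs
        dsimp only
        have h' : c ≤ s := hs.1
        rw [hc] at h'
        have hts : t - s ≤ a / (2*κ) := by linarith
        have hA : (t - s) * (2*κ) ≤ a := (le_div_iff₀ (by positivity)).1 hts
        rw [max_eq_left (by nlinarith)]
        ring
      rw [this, intervalIntegral.integral_zero]
    have h1 : ∫ s in (0:ℝ)..c, (1/4 : ℝ) * max 0 (2*κ*(t-s) - a)
        = ∫ s in (0:ℝ)..c, ((1/4) * (2*κ*t - a) - (κ/2) * s) := by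
      apply intervalIntegral.integral_congr
      intro s hs
      rw [Set.uIcc_of_le hc0, Set.mem_Icc] at hs
      dsimp only
      have h' : s ≤ c := hs.2
      rw [hc] at h'
      have hts : a / (2*κ) ≤ t - s := by linarith
      have hA : a ≤ (t - s) * (2*κ) := (div_le_iff₀ (by positivity)).1 hts
      rw [max_eq_right (by nlinarith)]
      ring
    have h3 : ∫ s in (0:ℝ)..c, ((1/4 : ℝ) * (2*κ*t - a) - (κ/2) * s)
        = (1/4) * (2*κ*t - a) * c - (κ/2) * (c^2/2) := by
      rw [intervalIntegral.integral_sub (g := fun s : ℝ => (κ/2) * s) (intervalIntegrable_const)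
        ((continuous_const.mul continuous_id').intervalIntegrable _ _),
        intervalIntegral.integral_const, intervalIntegral.integral_const_mul,
        integral_id]
      simp [smul_eq_mul]; ring
    have hT : Tker κ t (x - y) = c := by
      rw [Tker, if_pos hcase, hc]
    rw [hsplit, h1, h2, h3, hT, add_zero, hc]
    field_simp
    ring
  · have hT : Tker κ t (x - y) = 0 := by rw [Tker, if_neg hcase]
    rw [hT]
    push_neg at hcase
    have : (∫ s in (0:ℝ)..t, (1/4 : ℝ) * max 0 (2*κ*(t-s) - a)) = ∫ _s in (0:ℝ)..t, (0:ℝ) := by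
      apply intervalIntegral.integral_congr
      intro s hs
      rw [Set.uIcc_of_le ht, Set.mem_Icc] at hs
      dsimp only
      have hX : 2*κ*(t-s) - a ≤ 0 := by nlinarith [hs.1]
      rw [max_eq_left hX]; ring
    rw [this, intervalIntegral.integral_zero]; ring
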